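/- arXiv:0811.3739 — 5 statements merged into one kernel-verified Lean document; each statement's English description precedes it below -/
import Mathlib

section
/- Let ρ be a density matrix on ℂ² ⊗ ℂ² whose rank is at least 2 (i.e., ρ is not a pure state). Then for every entangled unit vector φ ∈ ℂ² ⊗ ℂ² and every separable operation given by Kraus operators {A_k ⊗ B_k}_{k=1,…,n}, one has ∑_{k=1}^n (A_k ⊗ B_k) ρ (A_k ⊗ B_k)† ≠ |φ⟩⟨φ|. In other words, no separable operation deterministically transforms a mixed state on ℂ² ⊗ ℂ² into a pure entangled state. -/
open Kronecker Matrix ComplexOrder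

noncomputable section

/-- Product (simple) vector in `ℂ^a ⊗ ℂ^b`, identified with functions `Fin a × Fin b → ℂ`. -/
def IsSimpleVec {a b : ℕ} (v : Fin a × Fin b → ℂ) : Prop :=
  ∃ (x : Fin a → ℂ) (y : Fin b → ℂ), v = fun p => x p.1 * y p.2

/-- Rank-one projection `|v⟩⟨v|`. -/
def proj {d : Type*} [Fintype d] (v : d → ℂ) : Matrix d d ℂ :=
  Matrix.vecMulVec v (star v)

lemma isSimpleVec_smul {a b : ℕ} (c : ℂ) (v : Fin a × Fin b → ℂ)
    (h : IsSimpleVec v) : IsSimpleVec (c • v) := by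
  obtain ⟨x, y, rfl⟩ := h
  exact ⟨c • x, y, by funext p; simp [mul_assoc]⟩

/-- A singular 2×2 matrix is an outer product. -/
lemma sing_outer (M : Matrix (Fin 2) (Fin 2) ℂ) (h : M.det = 0) :
    ∃ x y : Fin 2 → ℂ, ∀ i j, M i j = x i * y j := by
  rw [Matrix.det_fin_two] at h
  by_cases h0 : M 0 0 = 0
  · by_cases h1 : M 1 0 = 0
    · exact ⟨![M 0 1, M 1 1], ![0, 1], by
        intro i j; fin_cases i <;> fin_cases j <;> simp_all⟩
    · have h01 : M 0 1 = 0 := by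
        have h2 : M 0 1 * M 1 0 = 0 := by linear_combination -h + M 1 1 * h0
        rcases mul_eq_zero.mp h2 with h' | h'
        · exact h'
        · exact absurd h' h1
      refine ⟨![M 0 0, M 1 0], ![1, M 1 1 / M 1 0], ?_⟩
      intro i j; fin_cases i <;> fin_cases j
      · simp [h0]
      · simp [h0, h01]
      · simp
      · show M 1 1 = M 1 0 * (M 1 1 / M 1 0)
        field_simp
  · refine ⟨![M 0 0, M 1 0], ![1, M 0 1 / M 0 0], ?_⟩
    intro i j; fin_cases i <;> fin_cases j
    · simp
    · show M 0 1 = M 0 0 * (M 0 1 / M 0 0)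
      field_simp
    · simp
    · show M 1 1 = M 1 0 * (M 0 1 / M 0 0)
      field_simp
      linear_combination h

lemma kron_left_simple (A B : Matrix (Fin 2) (Fin 2) ℂ) (x y : Fin 2 → ℂ)
    (hA : ∀ i j, A i j = x i * y j) (w : Fin 2 × Fin 2 → ℂ) :
    IsSimpleVec ((A ⊗ₖ B) *ᵥ w) := by
  refine ⟨x, fun j => ∑ p : Fin 2 × Fin 2, y p.1 * B j p.2 * w p, ?_⟩
  funext q
  simp only [mulVec, dotProduct, kroneckerMap_apply, Finset.mul_sum]
  refine Finset.sum_congr rfl fun p _ => ?_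
  rw [hA]
  ring

lemma kron_right_simple (A B : Matrix (Fin 2) (Fin 2) ℂ) (x y : Fin 2 → ℂ)
    (hB : ∀ i j, B i j = x i * y j) (w : Fin 2 × Fin 2 → ℂ) :
    IsSimpleVec ((A ⊗ₖ B) *ᵥ w) := by
  refine ⟨fun i => ∑ p : Fin 2 × Fin 2, A i p.1 * y p.2 * w p, x, ?_⟩
  funext q
  simp only [mulVec, dotProduct, kroneckerMap_apply, Finset.sum_mul]
  refine Finset.sum_congr rfl fun p _ => ?_
  rw [hB]
  ring

lemma rank_vecMulVec_le' {m : Type*} [Fintype m] [DecidableEq m]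
    (v w : m → ℂ) : (Matrix.vecMulVec v w).rank ≤ 1 := by
  have hr : LinearMap.range (Matrix.vecMulVec v w).mulVecLin ≤ Submodule.span ℂ {v} := by
    rintro z ⟨u, rfl⟩
    have : (Matrix.vecMulVec v w).mulVecLin u = (w ⬝ᵥ u) • v := by
      funext i
      simp [Matrix.mulVecLin, Matrix.mulVec, dotProduct, Matrix.vecMulVec_apply,
        Finset.mul_sum, mul_comm, mul_left_comm]
    rw [this]
    exact Submodule.smul_mem _ _ (Submodule.mem_span_singleton_self v)
  calc (Matrix.vecMulVec v w).rank ≤ Module.finrank ℂ (Submodule.span ℂ {v}) :=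
        Submodule.finrank_mono hr
    _ ≤ 1 := by
        by_cases hv : v = 0
        · subst hv
          rw [Submodule.span_zero_singleton]
          simp
        · exact le_of_eq (finrank_span_singleton hv)

theorem no_sep_distillation_two_two {n : ℕ}
    (ρ : Matrix (Fin 2 × Fin 2) (Fin 2 × Fin 2) ℂ)
    (hρ : ρ.PosSemidef) (htr : ρ.trace = 1) (hrank : 2 ≤ ρ.rank)
    (φ : Fin 2 × Fin 2 → ℂ) (hunit : star φ ⬝ᵥ φ = 1) (hent : ¬ IsSimpleVec φ)
    (A : Fin n → Matrix (Fin 2) (Fin 2) ℂ) (B : Fin n → Matrix (Fin 2) (Fin 2) ℂ)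
    (hcomp : ∑ k, (A k ⊗ₖ B k)ᴴ * (A k ⊗ₖ B k) = 1) :
    ∑ k, (A k ⊗ₖ B k) * ρ * (A k ⊗ₖ B k)ᴴ ≠ proj φ := by
  intro heq
  open scoped MatrixOrder in
  set S : Matrix (Fin 2 × Fin 2) (Fin 2 × Fin 2) ℂ := CFC.sqrt ρ with hSdef
  open scoped MatrixOrder in
  have hSH : Sᴴ = S := (CFC.sqrt_nonneg ρ).posSemidef.1
  open scoped MatrixOrder in
  have hSS : S * S = ρ := CFC.sqrt_mul_sqrt_self ρ hρ.nonneg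
  set N : Fin n → Matrix (Fin 2 × Fin 2) (Fin 2 × Fin 2) ℂ :=
    fun k => (A k ⊗ₖ B k) * S with hNdef
  have hM : ∀ k, (A k ⊗ₖ B k) * ρ * (A k ⊗ₖ B k)ᴴ = N k * (N k)ᴴ := by
    intro k
    rw [hNdef]
    simp only [Matrix.conjTranspose_mul, hSH, ← hSS, Matrix.mul_assoc]
  have hsum : ∑ k, N k * (N k)ᴴ = proj φ := by
    rw [← heq]
    exact Finset.sum_congr rfl fun k _ => (hM k).symm
  -- Step A : columns of each N k are killed (on adjoint side) by vectors ⊥ φ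
  have stepA : ∀ k, ∀ u : Fin 2 × Fin 2 → ℂ, star φ ⬝ᵥ u = 0 → (N k)ᴴ *ᵥ u = 0 := by
    intro k u hu
    have hterm : ∀ j, star u ⬝ᵥ ((N j * (N j)ᴴ) *ᵥ u)
        = star ((N j)ᴴ *ᵥ u) ⬝ᵥ ((N j)ᴴ *ᵥ u) := by
      intro j
      rw [← Matrix.mulVec_mulVec, Matrix.dotProduct_mulVec]
      congr 1
      rw [← Matrix.conjTranspose_conjTranspose (N j), ← Matrix.star_mulVec,
        Matrix.conjTranspose_conjTranspose]
    have hprojz : star u ⬝ᵥ (proj φ *ᵥ u) = 0 := by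
      have hpv : proj φ *ᵥ u = (star φ ⬝ᵥ u) • φ := by
        funext i
        simp only [proj, Matrix.mulVec, dotProduct, Matrix.vecMulVec_apply,
          Pi.smul_apply, smul_eq_mul, Finset.sum_mul, Finset.mul_sum]
        refine Finset.sum_congr rfl fun p _ => ?_
        simp [Pi.star_apply]
        ring
      rw [hpv, hu, zero_smul, dotProduct_zero]
    have hdistrib : (∑ j, N j * (N j)ᴴ) *ᵥ u = ∑ j, (N j * (N j)ᴴ) *ᵥ u :=
      map_sum (Matrix.mulVec.addMonoidHomLeft u) _ Finset.univ
    have hdist2 : star u ⬝ᵥ (∑ j, (N j * (N j)ᴴ) *ᵥ u)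
        = ∑ j, star u ⬝ᵥ ((N j * (N j)ᴴ) *ᵥ u) := by
      simp only [dotProduct, Finset.sum_apply, Finset.mul_sum]
      rw [Finset.sum_comm]
    have hsum0 : ∑ j, star u ⬝ᵥ ((N j * (N j)ᴴ) *ᵥ u) = 0 := by
      rw [← hdist2, ← hdistrib, hsum, hprojz]
    have hnonneg : ∀ j ∈ Finset.univ, (0:ℂ) ≤ star u ⬝ᵥ ((N j * (N j)ᴴ) *ᵥ u) := by
      intro j _
      rw [hterm j]
      exact dotProduct_star_self_nonneg _
    have hk0 : star u ⬝ᵥ ((N k * (N k)ᴴ) *ᵥ u) = 0 :=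
      (Finset.sum_eq_zero_iff_of_nonneg hnonneg).mp hsum0 k (Finset.mem_univ k)
    rw [hterm k] at hk0
    exact dotProduct_star_self_eq_zero.mp hk0
  -- Step B : each N k is an outer product with φ
  have stepB : ∀ k, ∃ α : Fin 2 × Fin 2 → ℂ, N k = Matrix.vecMulVec φ α := by
    intro k
    have hcol : ∀ j, ∃ β : ℂ, ∀ i, N k i j = φ i * β := by
      intro j
      set c : Fin 2 × Fin 2 → ℂ := fun i => N k i j with hc
      set β : ℂ := star φ ⬝ᵥ c with hβ
      set u : Fin 2 × Fin 2 → ℂ := c - β • φ with hudef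
      have hu : star φ ⬝ᵥ u = 0 := by
        rw [hudef, dotProduct_sub, dotProduct_smul, hunit, ← hβ]
        simp
      have hkill := stepA k u hu
      have hvm : star u ᵥ* N k = 0 := by
        rw [← Matrix.conjTranspose_conjTranspose (N k), ← Matrix.star_mulVec, hkill]
        simp
      have huc : star u ⬝ᵥ c = 0 := by
        have := congrFun hvm j
        simpa [Matrix.vecMul, dotProduct, hc] using this
      have huφ : star u ⬝ᵥ φ = 0 := by
        rw [Matrix.star_dotProduct, hu, star_zero]
      have huu : star u ⬝ᵥ u = 0 := by
        rw [hudef, dotProduct_sub, dotProduct_smul]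
        rw [← hudef, huc, huφ]
        simp
      have hu0 : u = 0 := dotProduct_star_self_eq_zero.mp huu
      refine ⟨β, fun i => ?_⟩
      have := congrFun hu0 i
      simp only [hudef, Pi.sub_apply, Pi.smul_apply, Pi.zero_apply, smul_eq_mul] at this
      have : c i = β * φ i := by linear_combination this
      rw [hc] at this
      simpa [mul_comm] using this
    choose β hβ using hcol
    exact ⟨β, by ext i j; rw [Matrix.vecMulVec_apply]; exact hβ j i⟩
  -- φ is nonzero
  have hφ0 : φ ≠ 0 := by
    intro h
    rw [h] at hunit
    simp at hunit
  -- Step C : some N k is nonzero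
  have stepC : ∃ k, N k ≠ 0 := by
    by_contra h
    push_neg at h
    have hz : proj φ = 0 := by
      rw [← hsum]
      refine Finset.sum_eq_zero fun k _ => ?_
      rw [h k]
      simp
    apply hφ0
    funext i
    have := congrFun (congrFun hz i) i
    simp only [proj, Matrix.vecMulVec_apply, Pi.star_apply, Matrix.zero_apply] at this
    rcases mul_eq_zero.mp this with h' | h'
    · exact h'
    · simpa using congrArg star h'
  obtain ⟨k, hk⟩ := stepC
  obtain ⟨α, hα⟩ := stepB k
  have hαne : ∃ j, α j ≠ 0 := by
    by_contra h
    push_neg at h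
    apply hk
    rw [hα]
    ext i j
    simp [Matrix.vecMulVec_apply, h j]
  obtain ⟨j₀, hj₀⟩ := hαne
  set w : Fin 2 × Fin 2 → ℂ := fun i => S i j₀ with hw
  have hcolv : (A k ⊗ₖ B k) *ᵥ w = α j₀ • φ := by
    funext i
    have h1 : ((A k ⊗ₖ B k) * S) i j₀ = φ i * α j₀ := by
      rw [show (A k ⊗ₖ B k) * S = N k from rfl, hα, Matrix.vecMulVec_apply]
    have h2 : ((A k ⊗ₖ B k) *ᵥ w) i = ((A k ⊗ₖ B k) * S) i j₀ := by
      simp [Matrix.mulVec, dotProduct, Matrix.mul_apply, hw]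
    rw [h2, h1, Pi.smul_apply, smul_eq_mul, mul_comm]
  have hφsimple : IsSimpleVec ((A k ⊗ₖ B k) *ᵥ w) → False := by
    intro hs
    apply hent
    have : φ = (α j₀)⁻¹ • ((A k ⊗ₖ B k) *ᵥ w) := by
      rw [hcolv, smul_smul, inv_mul_cancel₀ hj₀, one_smul]
    rw [this]
    exact isSimpleVec_smul _ _ hs
  by_cases hdA : (A k).det = 0
  · obtain ⟨x, y, hxy⟩ := sing_outer (A k) hdA
    exact hφsimple (kron_left_simple _ _ x y hxy w)
  by_cases hdB : (B k).det = 0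
  · obtain ⟨x, y, hxy⟩ := sing_outer (B k) hdB
    exact hφsimple (kron_right_simple _ _ x y hxy w)
  -- both invertible : rank contradiction
  have hdet : IsUnit ((A k ⊗ₖ B k).det) := by
    rw [Matrix.det_kronecker]
    exact (mul_ne_zero (pow_ne_zero _ hdA) (pow_ne_zero _ hdB)).isUnit
  have h1 : (N k).rank = S.rank :=
    Matrix.rank_mul_eq_right_of_isUnit_det (A k ⊗ₖ B k) S hdet
  have h2 : ρ.rank ≤ S.rank := by
    rw [← hSS]
    exact Matrix.rank_mul_le_left S S
  have h3 : (N k).rank ≤ 1 := by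
    rw [hα]
    exact rank_vecMulVec_le' φ α
  omega
end
end

section
/- Let ρ be a density matrix on ℂ² ⊗ ℂ³ whose rank is at least 2 (i.e., ρ is not a pure state). Then for every entangled unit vector φ ∈ ℂ² ⊗ ℂ³ and every separable operation given by Kraus operators {A_k ⊗ B_k}_{k=1,…,n}, one has ∑_{k=1}^n (A_k ⊗ B_k) ρ (A_k ⊗ B_k)† ≠ |φ⟩⟨φ|. In other words, no separable operation deterministically transforms a mixed state on ℂ² ⊗ ℂ³ into a pure entangled state. -/
open Kronecker Matrix ComplexOrder

noncomputable section

lemma simple_iff_minors (v : Fin 2 × Fin 3 → ℂ) :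
    IsSimpleVec v ↔ ∀ i j, v (0,i) * v (1,j) = v (0,j) * v (1,i) := by
  constructor
  · rintro ⟨x, y, rfl⟩ i j; ring
  · intro h
    by_cases h0 : ∀ j, v (0, j) = 0
    · exact ⟨![0,1], fun j => v (1,j), by
        funext p
        obtain ⟨a, j⟩ := p
        fin_cases a <;> simp [h0]⟩
    · push_neg at h0
      obtain ⟨i₀, hi₀⟩ := h0
      refine ⟨![1, v (1,i₀) / v (0,i₀)], fun j => v (0,j), ?_⟩
      funext p
      obtain ⟨a, j⟩ := p
      fin_cases a
      · simp
      · simp only [Fin.mk_one, Fin.isValue, Matrix.cons_val_one, Matrix.cons_val_zero, Matrix.head_cons]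
        field_simp
        linear_combination h i₀ j

lemma eq_smul_of_ortho {d : Type*} [Fintype d] (φ v : d → ℂ) (hφ : star φ ⬝ᵥ φ = 1)
    (h : ∀ y : d → ℂ, star φ ⬝ᵥ y = 0 → star y ⬝ᵥ v = 0) : ∃ c : ℂ, v = c • φ := by
  set c := star φ ⬝ᵥ v with hc
  refine ⟨c, ?_⟩
  set y := v - c • φ with hy
  have h1 : star φ ⬝ᵥ y = 0 := by
    simp only [hy, dotProduct_sub, dotProduct_smul, smul_eq_mul, hφ, mul_one, ← hc, sub_self]
  have h2 : star y ⬝ᵥ v = 0 := h y h1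
  have h3 : star y ⬝ᵥ φ = 0 := by
    rw [star_dotProduct, h1, star_zero]
  have h4 : star y ⬝ᵥ y = 0 := by
    simp only [hy, dotProduct_sub, dotProduct_smul, smul_eq_mul]
    rw [show (v - c • φ) = y from rfl] at *
    simp [h2, h3]
  have := dotProduct_star_self_eq_zero.mp h4
  rw [hy] at this
  exact (sub_eq_zero.mp this)

lemma indep_of_minor {u v : Fin 3 → ℂ} {i j : Fin 3}
    (h : u i * v j - u j * v i ≠ 0) : LinearIndependent ℂ ![u, v] := by
  rw [LinearIndependent.pair_iff]
  intro s t hst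
  have hi := congr_fun hst i
  have hj := congr_fun hst j
  simp only [Pi.add_apply, Pi.smul_apply, smul_eq_mul, Pi.zero_apply] at hi hj
  constructor
  · by_contra hs
    apply h
    have : s * (u i * v j - u j * v i) = (s * u i + t * v i) * v j - (s * u j + t * v j) * v i := by ring
    rw [hi, hj] at this
    ring_nf at this
    rcases mul_eq_zero.mp (show s * (u i * v j - u j * v i) = 0 by linear_combination this) with h' | h'
    · exact absurd h' hs
    · exact h'
  · by_contra ht
    apply h
    have : t * (u i * v j - u j * v i) = u i * (s * u j + t * v j) - u j * (s * u i + t * v i) := by ring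
    rw [hi, hj] at this
    ring_nf at this
    rcases mul_eq_zero.mp (show t * (u i * v j - u j * v i) = 0 by linear_combination this) with h' | h'
    · exact absurd h' ht
    · exact h'

lemma two_le_finrank_of_pair {V : Type*} [AddCommGroup V] [Module ℂ V] [FiniteDimensional ℂ V]
    {W : Submodule ℂ V} {u v : V} (hu : u ∈ W) (hv : v ∈ W)
    (h : LinearIndependent ℂ ![u, v]) : 2 ≤ Module.finrank ℂ W := by
  have h' : LinearIndependent ℂ (fun i : Fin 2 => (![⟨u, hu⟩, ⟨v, hv⟩] i : W)) := by
    apply LinearIndependent.of_comp W.subtype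
    convert h
    funext i
    fin_cases i <;> rfl
  simpa using h'.fintype_card_le_finrank

lemma kron_mulVec (A : Matrix (Fin 2) (Fin 2) ℂ) (B : Matrix (Fin 3) (Fin 3) ℂ)
    (x : Fin 2 × Fin 3 → ℂ) (p : Fin 2 × Fin 3) :
    ((A ⊗ₖ B) *ᵥ x) p = ∑ k, A p.1 k * (∑ l, B p.2 l * x (k, l)) := by
  simp only [mulVec, dotProduct, Fintype.sum_prod_type, kroneckerMap_apply, Finset.mul_sum]
  congr 1; funext k; congr 1; funext l; ring

lemma minor_mul (A : Matrix (Fin 2) (Fin 2) ℂ) (N : Matrix (Fin 2) (Fin 3) ℂ) (i j : Fin 3) :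
    (∑ k, A 0 k * N k i) * (∑ k, A 1 k * N k j) - (∑ k, A 0 k * N k j) * (∑ k, A 1 k * N k i)
      = A.det * (N 0 i * N 1 j - N 0 j * N 1 i) := by
  simp only [Fin.sum_univ_two, Matrix.det_fin_two]
  ring

lemma kron_mulVec_simple (A : Matrix (Fin 2) (Fin 2) ℂ) (B : Matrix (Fin 3) (Fin 3) ℂ)
    (f : Fin 2 → ℂ) (z : Fin 3 → ℂ) :
    ((A ⊗ₖ B) *ᵥ fun p => f p.1 * z p.2) = fun p => (A *ᵥ f) p.1 * (B *ᵥ z) p.2 := by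
  funext p
  rw [kron_mulVec]
  simp only [mulVec, dotProduct]
  rw [Finset.sum_mul_sum]
  refine Finset.sum_congr rfl fun k _ => ?_
  rw [Finset.mul_sum]
  refine Finset.sum_congr rfl fun l _ => ?_
  ring

lemma sum_mulVec' {ι d : Type*} [Fintype d] (s : Finset ι) (M : ι → Matrix d d ℂ) (y : d → ℂ) :
    (∑ k ∈ s, M k) *ᵥ y = ∑ k ∈ s, (M k) *ᵥ y := by
  funext p
  simp only [mulVec, dotProduct, Finset.sum_apply, Matrix.sum_apply, Finset.sum_mul]
  rw [Finset.sum_comm]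

lemma dotProduct_sum' {ι d : Type*} [Fintype d] (s : Finset ι) (x : d → ℂ) (v : ι → d → ℂ) :
    x ⬝ᵥ (∑ k ∈ s, v k) = ∑ k ∈ s, x ⬝ᵥ v k := by
  simp only [dotProduct, Finset.sum_apply, Finset.mul_sum]
  rw [Finset.sum_comm]

lemma proj_mulVec {d : Type*} [Fintype d] (φ y : d → ℂ) :
    proj φ *ᵥ y = (star φ ⬝ᵥ y) • φ := by
  funext p
  simp only [proj, mulVec, dotProduct, vecMulVec_apply, Pi.smul_apply, smul_eq_mul,
    Finset.sum_mul]
  exact Finset.sum_congr rfl fun k _ => by ring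

theorem no_sep_distillation_two_three {n : ℕ}
    (ρ : Matrix (Fin 2 × Fin 3) (Fin 2 × Fin 3) ℂ)
    (hρ : ρ.PosSemidef) (htr : ρ.trace = 1) (hrank : 2 ≤ ρ.rank)
    (φ : Fin 2 × Fin 3 → ℂ) (hunit : star φ ⬝ᵥ φ = 1) (hent : ¬ IsSimpleVec φ)
    (A : Fin n → Matrix (Fin 2) (Fin 2) ℂ) (B : Fin n → Matrix (Fin 3) (Fin 3) ℂ)
    (hcomp : ∑ k, (A k ⊗ₖ B k)ᴴ * (A k ⊗ₖ B k) = 1) :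
    ∑ k, (A k ⊗ₖ B k) * ρ * (A k ⊗ₖ B k)ᴴ ≠ proj φ := by
  intro h
  set E : Fin n → Matrix (Fin 2 × Fin 3) (Fin 2 × Fin 3) ℂ := fun k => A k ⊗ₖ B k with hE
  have hφne : φ ≠ 0 := by
    intro h0; rw [h0] at hunit; simp at hunit
  -- Step 2: each E k maps range ρ into span φ
  have key : ∀ (k : Fin n) (x : Fin 2 × Fin 3 → ℂ), ∃ c : ℂ, E k *ᵥ (ρ *ᵥ x) = c • φ := by
    intro k x
    apply eq_smul_of_ortho φ _ hunit
    intro y hy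
    -- the quadratic forms sum to zero
    have hterm : ∀ j : Fin n, star y ⬝ᵥ ((E j * ρ * (E j)ᴴ) *ᵥ y) = 0 := by
      have hsum : ∑ j : Fin n, star y ⬝ᵥ ((E j * ρ * (E j)ᴴ) *ᵥ y) = 0 := by
        rw [← dotProduct_sum', ← sum_mulVec', h, proj_mulVec, hy, zero_smul, dotProduct_zero]
      have hnn : ∀ j ∈ Finset.univ, (0:ℂ) ≤ star y ⬝ᵥ ((E j * ρ * (E j)ᴴ) *ᵥ y) := by
        intro j _
        exact (hρ.mul_mul_conjTranspose_same (E j)).dotProduct_mulVec_nonneg y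
      intro j
      exact (Finset.sum_eq_zero_iff_of_nonneg hnn).mp hsum j (Finset.mem_univ j)
    -- hence ρ *ᵥ ((E k)ᴴ *ᵥ y) = 0
    have hz : ρ *ᵥ ((E k)ᴴ *ᵥ y) = 0 := by
      apply (hρ.dotProduct_mulVec_zero_iff _).mp
      rw [star_mulVec, conjTranspose_conjTranspose, ← dotProduct_mulVec, mulVec_mulVec,
        mulVec_mulVec]
      exact hterm k
    -- conclude orthogonality
    have hstar : star y ᵥ* E k = star ((E k)ᴴ *ᵥ y) := by
      rw [star_mulVec, conjTranspose_conjTranspose]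
    rw [dotProduct_mulVec, hstar, dotProduct_mulVec]
    have hzz : star ((E k)ᴴ *ᵥ y) ᵥ* ρ = 0 := by
      nth_rewrite 1 [← hρ.1.eq]
      rw [← star_mulVec, hz, star_zero]
    rw [hzz, zero_dotProduct]
  -- Step 3: find k₀ with nonzero coefficient
  have step3 : ∃ (k₀ : Fin n) (v : Fin 2 × Fin 3 → ℂ) (c : ℂ),
      E k₀ *ᵥ (ρ *ᵥ v) = c • φ ∧ c ≠ 0 := by
    by_contra hcon
    push_neg at hcon
    have hall : ∀ k : Fin n, E k *ᵥ (ρ *ᵥ ((E k)ᴴ *ᵥ φ)) = 0 := by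
      intro k
      obtain ⟨c, hc⟩ := key k ((E k)ᴴ *ᵥ φ)
      have := hcon k ((E k)ᴴ *ᵥ φ) c hc
      rw [hc, this, zero_smul]
    have hφ1 : (∑ k, E k * ρ * (E k)ᴴ) *ᵥ φ = φ := by
      rw [h, proj_mulVec, hunit, one_smul]
    rw [sum_mulVec'] at hφ1
    have : ∀ k ∈ Finset.univ, (E k * ρ * (E k)ᴴ) *ᵥ φ = 0 := by
      intro k _
      rw [← mulVec_mulVec, ← mulVec_mulVec]
      exact hall k
    rw [Finset.sum_congr rfl this] at hφ1
    simp at hφ1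
    exact hφne hφ1.symm
  obtain ⟨k₀, v, c, hc, hcne⟩ := step3
  set w₁ : Fin 2 × Fin 3 → ℂ := ρ *ᵥ v with hw₁
  have hw₁ne : w₁ ≠ 0 := by
    intro h0
    rw [h0, mulVec_zero] at hc
    exact hφne (by
      have : c • φ = 0 := hc.symm
      simpa [smul_eq_zero, hcne] using this)
  -- Step 4: get u with ρ u outside span of w₁
  have step4 : ∃ u : Fin 2 × Fin 3 → ℂ, ∀ e : ℂ, ρ *ᵥ u ≠ e • w₁ := by
    by_contra hcon
    push_neg at hcon
    have hle : LinearMap.range ρ.mulVecLin ≤ Submodule.span ℂ {w₁} := by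
      rintro x ⟨u, rfl⟩
      obtain ⟨e, he⟩ := hcon u
      rw [mulVecLin_apply, he]
      exact Submodule.smul_mem _ _ (Submodule.mem_span_singleton_self w₁)
    have : ρ.rank ≤ Module.finrank ℂ (Submodule.span ℂ {w₁}) := by
      exact Submodule.finrank_mono hle
    rw [finrank_span_singleton hw₁ne] at this
    omega
  obtain ⟨u, hu⟩ := step4
  obtain ⟨d, hd⟩ := key k₀ u
  set x₀ : Fin 2 × Fin 3 → ℂ := c • (ρ *ᵥ u) - d • w₁ with hx₀
  have hx₀ne : x₀ ≠ 0 := by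
    intro h0
    have : c • (ρ *ᵥ u) = d • w₁ := by
      rw [hx₀] at h0; exact sub_eq_zero.mp h0
    apply hu (c⁻¹ * d)
    rw [mul_smul, ← this, inv_smul_smul₀ hcne]
  have hEx₀ : E k₀ *ᵥ x₀ = 0 := by
    rw [hx₀, mulVec_sub, mulVec_smul, mulVec_smul, hc, hd]
    rw [smul_comm c d φ]
    simp
  have hx₀ran : ∀ k : Fin n, ∃ e : ℂ, E k *ᵥ x₀ = e • φ := by
    intro k
    have : x₀ = ρ *ᵥ (c • u - d • v) := by
      rw [hx₀, mulVec_sub, mulVec_smul, mulVec_smul, hw₁]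
    rw [this]
    exact key k _
  -- Step 5: show x₀ is simple
  -- minor of φ
  have hφm : ∃ i j, φ (0,i) * φ (1,j) - φ (0,j) * φ (1,i) ≠ 0 := by
    by_contra hcon
    push_neg at hcon
    exact hent ((simple_iff_minors φ).mpr (fun i j => sub_eq_zero.mp (hcon i j)))
  obtain ⟨i₁, j₁, hm⟩ := hφm
  -- matrix N from w₁
  set N : Matrix (Fin 2) (Fin 3) ℂ := fun k i => ∑ l, B k₀ i l * w₁ (k, l) with hN
  have hNc : ∀ (a : Fin 2) (i : Fin 3), ∑ k, A k₀ a k * N k i = c * φ (a, i) := by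
    intro a i
    have := congr_fun hc (a, i)
    rw [kron_mulVec] at this
    simpa using this
  have hdet : (A k₀).det * (N 0 i₁ * N 1 j₁ - N 0 j₁ * N 1 i₁)
      = c^2 * (φ (0,i₁) * φ (1,j₁) - φ (0,j₁) * φ (1,i₁)) := by
    rw [← minor_mul, hNc 0 i₁, hNc 1 j₁, hNc 0 j₁, hNc 1 i₁]
    ring
  have hdetA : (A k₀).det ≠ 0 := by
    intro h0
    rw [h0, zero_mul] at hdet
    have : c^2 * (φ (0,i₁) * φ (1,j₁) - φ (0,j₁) * φ (1,i₁)) ≠ 0 :=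
      mul_ne_zero (pow_ne_zero 2 hcne) hm
    exact this hdet.symm
  have hNm : N 0 i₁ * N 1 j₁ - N 0 j₁ * N 1 i₁ ≠ 0 := by
    intro h0
    rw [h0, mul_zero] at hdet
    exact mul_ne_zero (pow_ne_zero 2 hcne) hm hdet.symm
  -- rows of X₀ are killed by B k₀
  set X : Matrix (Fin 2) (Fin 3) ℂ := fun k i => ∑ l, B k₀ i l * x₀ (k, l) with hX
  have hAX : A k₀ * X = 0 := by
    ext a i
    have := congr_fun hEx₀ (a, i)
    rw [kron_mulVec] at this
    rw [Matrix.mul_apply]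
    simpa [hX] using this
  have hX0 : X = 0 := by
    have hinv := Matrix.nonsing_inv_mul (A k₀) (isUnit_iff_ne_zero.mpr hdetA)
    calc X = ((A k₀)⁻¹ * A k₀) * X := by rw [hinv, Matrix.one_mul]
    _ = (A k₀)⁻¹ * (A k₀ * X) := by rw [Matrix.mul_assoc]
    _ = 0 := by rw [hAX, Matrix.mul_zero]
  have hrows : ∀ (k : Fin 2), (B k₀).mulVecLin (fun l => x₀ (k, l)) = 0 := by
    intro k
    funext i
    have := congr_fun (congr_fun hX0 k) i
    simpa [mulVecLin_apply, mulVec, dotProduct, hX] using this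
  -- x₀ is simple
  have hx₀simple : IsSimpleVec x₀ := by
    rw [simple_iff_minors]
    intro i j
    by_contra hne
    have hindep : LinearIndependent ℂ ![fun l => x₀ (0, l), fun l => x₀ (1, l)] :=
      indep_of_minor (sub_ne_zero.mpr hne)
    have hindep2 : LinearIndependent ℂ ![(N 0 : Fin 3 → ℂ), N 1] :=
      indep_of_minor hNm
    have hker : 2 ≤ Module.finrank ℂ (LinearMap.ker (B k₀).mulVecLin) :=
      two_le_finrank_of_pair (LinearMap.mem_ker.mpr (hrows 0)) (LinearMap.mem_ker.mpr (hrows 1)) hindep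
    have hrange : 2 ≤ Module.finrank ℂ (LinearMap.range (B k₀).mulVecLin) := by
      apply two_le_finrank_of_pair (u := (N 0 : Fin 3 → ℂ)) (v := N 1) _ _ hindep2
      · exact ⟨fun l => w₁ (0, l), by funext i; simp [mulVecLin_apply, mulVec, dotProduct, hN]⟩
      · exact ⟨fun l => w₁ (1, l), by funext i; simp [mulVecLin_apply, mulVec, dotProduct, hN]⟩
    have hrn := LinearMap.finrank_range_add_finrank_ker (B k₀).mulVecLin
    simp [Module.finrank_fintype_fun_eq_card] at hrn
    omega
  -- Step 6: E k x₀ = 0 for all k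
  obtain ⟨f, z, hfz⟩ := hx₀simple
  have hallzero : ∀ k : Fin n, E k *ᵥ x₀ = 0 := by
    intro k
    obtain ⟨e, he⟩ := hx₀ran k
    rcases eq_or_ne e 0 with he0 | hene
    · rw [he, he0, zero_smul]
    · exfalso
      apply hent
      have hsimp : E k *ᵥ x₀ = fun p => (A k *ᵥ f) p.1 * (B k *ᵥ z) p.2 := by
        rw [hfz]; exact kron_mulVec_simple (A k) (B k) f z
      have : φ = fun p => (e⁻¹ • (A k *ᵥ f)) p.1 * (B k *ᵥ z) p.2 := by
        funext p
        have := congr_fun hsimp p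
        rw [he] at this
        simp only [Pi.smul_apply, smul_eq_mul] at this ⊢
        field_simp
        linear_combination this
      exact ⟨_, _, this⟩
  -- Step 7: contradiction with completeness
  apply hx₀ne
  apply dotProduct_star_self_eq_zero.mp
  have h1 : star x₀ ⬝ᵥ x₀ = star x₀ ⬝ᵥ ((1 : Matrix (Fin 2 × Fin 3) (Fin 2 × Fin 3) ℂ) *ᵥ x₀) := by
    rw [one_mulVec]
  rw [h1, ← hcomp, sum_mulVec', dotProduct_sum']
  apply Finset.sum_eq_zero
  intro k _
  rw [← mulVec_mulVec, hallzero k, mulVec_zero, dotProduct_zero]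
end
end

section
/- For every p with 0 < p < 1, let ρ = p|ψ₁⟩⟨ψ₁| + (1−p)|ψ₂⟩⟨ψ₂| on ℂ³ ⊗ ℂ³. Then there exist an entangled unit vector φ ∈ ℂ³ ⊗ ℂ³ and a separable operation given by Kraus operators {A_k ⊗ B_k}_{k=1,…,n} with ∑_k (A_k ⊗ B_k)†(A_k ⊗ B_k) = I such that ∑_k (A_k ⊗ B_k) ρ (A_k ⊗ B_k)† = |φ⟩⟨φ|. That is, a mixed state on ℂ³ ⊗ ℂ³ can be deterministically transformed into a pure entangled state by a separable operation. -/
open Kronecker Matrix ComplexOrder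

noncomputable section

/-- The standard basis vector `|i⟩` of `ℂ³`. -/
def e (i : Fin 3) : Fin 3 → ℂ := Pi.single i 1

/-- `ψ₁ = (|0⟩⊗|1⟩ + |1⟩⊗|0⟩)/√2`. -/
def ψ₁ : Fin 3 × Fin 3 → ℂ :=
  ((Real.sqrt 2 : ℝ) : ℂ)⁻¹ • (fun p => e 0 p.1 * e 1 p.2 + e 1 p.1 * e 0 p.2)

/-- `ψ₂ = (|0⟩⊗|2⟩ + |2⟩⊗|0⟩)/√2`. -/
def ψ₂ : Fin 3 × Fin 3 → ℂ :=
  ((Real.sqrt 2 : ℝ) : ℂ)⁻¹ • (fun p => e 0 p.1 * e 2 p.2 + e 2 p.1 * e 0 p.2)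

/- ------------------ auxiliary data for the construction ------------------- -/

namespace SepDistAux

def X1 : Matrix (Fin 3) (Fin 3) ℂ := !![35/37, 0, 0; 0, 1/2, 1/2; 0, 0, 0]
def X2 : Matrix (Fin 3) (Fin 3) ℂ := !![35/37, 0, 0; 0, 1/2, -(1/2); 0, 0, 0]
def Y1 : Matrix (Fin 3) (Fin 3) ℂ := !![0, 1/2, 1/2; 12/37, 0, 0; 0, 0, 0]
def Y2 : Matrix (Fin 3) (Fin 3) ℂ := !![0, 1/2, -(1/2); 12/37, 0, 0; 0, 0, 0]
def K1 : Matrix (Fin 3) (Fin 3) ℂ := !![0, 0, 0; 0, 1, 1; 0, 0, 0]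
def K2 : Matrix (Fin 3) (Fin 3) ℂ := !![0, 0, 0; 0, 1, -1; 0, 0, 0]
def L1 : Matrix (Fin 3) (Fin 3) ℂ := !![0, 0, 0; 0, 1/2, -(1/2); 0, 0, 0]
def L2 : Matrix (Fin 3) (Fin 3) ℂ := !![0, 0, 0; 0, 1/2, 1/2; 0, 0, 0]
def P1 : Matrix (Fin 3) (Fin 3) ℂ := !![144/1369, 0, 0; 0, 0, 0; 0, 0, 0]
def P2 : Matrix (Fin 3) (Fin 3) ℂ := !![665/1369, 0, 0; 0, 0, 0; 0, 0, 0]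
def Q0 : Matrix (Fin 3) (Fin 3) ℂ := !![1, 0, 0; 0, 0, 0; 0, 0, 0]

def Φf : Fin 3 × Fin 3 → ℂ := fun x => !![(35/37 : ℂ), 0, 0; 0, 12/37, 0; 0, 0, 0] x.1 x.2

def AA : Fin 12 → Matrix (Fin 3) (Fin 3) ℂ :=
  ![X1, X2, Y1, Y2, X1, X2, Y1, Y2, K1, K2, P1, P2]
def BB : Fin 12 → Matrix (Fin 3) (Fin 3) ℂ :=
  ![Y1, Y2, X1, X2, Y1, Y2, X1, X2, L1, L2, Q0, Q0]

def sc : ℂ := ((Real.sqrt 2 : ℝ) : ℂ)⁻¹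

lemma star_sc : star sc = sc := by
  simp [sc, Complex.star_def]

lemma sc_mul_sc : sc * sc = 1/2 := by
  rw [sc, ← Complex.ofReal_inv, ← Complex.ofReal_mul]
  rw [show (Real.sqrt 2)⁻¹ * (Real.sqrt 2)⁻¹ = ((Real.sqrt 2) * (Real.sqrt 2))⁻¹ by
    rw [mul_inv]]
  rw [Real.mul_self_sqrt (by norm_num)]
  norm_num

/-- conjugate transpose of a Kronecker product -/
lemma kron_ct (M N : Matrix (Fin 3) (Fin 3) ℂ) : (M ⊗ₖ N)ᴴ = Mᴴ ⊗ₖ Nᴴ := by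
  ext ⟨i, a⟩ ⟨j, b⟩
  simp [Matrix.conjTranspose_apply, kroneckerMap_apply, star_mul']

lemma proj_mul {d : Type*} [Fintype d] (M : Matrix d d ℂ) (v : d → ℂ) :
    M * proj v * Mᴴ = proj (M *ᵥ v) := by
  ext i j
  simp only [proj, Matrix.mul_apply, Matrix.vecMulVec_apply, Matrix.conjTranspose_apply,
    Matrix.mulVec, dotProduct, Pi.star_apply, star_sum, star_mul']
  rw [Finset.mul_sum]
  refine Finset.sum_congr rfl fun x _ => ?_
  rw [Finset.sum_mul, Finset.sum_mul]
  refine Finset.sum_congr rfl fun y _ => by ring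


lemma proj_smul {d : Type*} [Fintype d] (c : ℂ) (v : d → ℂ) :
    proj (c • v) = (c * star c) • proj v := by
  ext i j
  simp [proj, Matrix.vecMulVec_apply, Pi.smul_apply, smul_eq_mul, Matrix.smul_apply, star_mul']
  ring

/- mulVec identities -/

lemma mv11 : (X1 ⊗ₖ Y1) *ᵥ ψ₁ = (sc * (1/2)) • Φf := by
  funext x; obtain ⟨i, j⟩ := x
  fin_cases i <;> fin_cases j <;>
    simp [ψ₁, e, sc, Matrix.mulVec, dotProduct, Fintype.sum_prod_type, Fin.sum_univ_three,
      kroneckerMap_apply, Pi.single_apply, X1, Y1, Φf, Matrix.vecHead, Matrix.vecTail] <;>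
    ring

lemma mv12 : (X1 ⊗ₖ Y1) *ᵥ ψ₂ = (sc * (1/2)) • Φf := by
  funext x; obtain ⟨i, j⟩ := x
  fin_cases i <;> fin_cases j <;>
    simp [ψ₂, e, sc, Matrix.mulVec, dotProduct, Fintype.sum_prod_type, Fin.sum_univ_three,
      kroneckerMap_apply, Pi.single_apply, X1, Y1, Φf, Matrix.vecHead, Matrix.vecTail] <;>
    ring

lemma mv21 : (X2 ⊗ₖ Y2) *ᵥ ψ₁ = (sc * (1/2)) • Φf := by
  funext x; obtain ⟨i, j⟩ := x
  fin_cases i <;> fin_cases j <;>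
    simp [ψ₁, e, sc, Matrix.mulVec, dotProduct, Fintype.sum_prod_type, Fin.sum_univ_three,
      kroneckerMap_apply, Pi.single_apply, X2, Y2, Φf, Matrix.vecHead, Matrix.vecTail] <;>
    ring

lemma mv22 : (X2 ⊗ₖ Y2) *ᵥ ψ₂ = (-(sc * (1/2))) • Φf := by
  funext x; obtain ⟨i, j⟩ := x
  fin_cases i <;> fin_cases j <;>
    simp [ψ₂, e, sc, Matrix.mulVec, dotProduct, Fintype.sum_prod_type, Fin.sum_univ_three,
      kroneckerMap_apply, Pi.single_apply, X2, Y2, Φf, Matrix.vecHead, Matrix.vecTail] <;>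
    ring

lemma mv31 : (Y1 ⊗ₖ X1) *ᵥ ψ₁ = (sc * (1/2)) • Φf := by
  funext x; obtain ⟨i, j⟩ := x
  fin_cases i <;> fin_cases j <;>
    simp [ψ₁, e, sc, Matrix.mulVec, dotProduct, Fintype.sum_prod_type, Fin.sum_univ_three,
      kroneckerMap_apply, Pi.single_apply, X1, Y1, Φf, Matrix.vecHead, Matrix.vecTail] <;>
    ring

lemma mv32 : (Y1 ⊗ₖ X1) *ᵥ ψ₂ = (sc * (1/2)) • Φf := by
  funext x; obtain ⟨i, j⟩ := x
  fin_cases i <;> fin_cases j <;>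
    simp [ψ₂, e, sc, Matrix.mulVec, dotProduct, Fintype.sum_prod_type, Fin.sum_univ_three,
      kroneckerMap_apply, Pi.single_apply, X1, Y1, Φf, Matrix.vecHead, Matrix.vecTail] <;>
    ring

lemma mv41 : (Y2 ⊗ₖ X2) *ᵥ ψ₁ = (sc * (1/2)) • Φf := by
  funext x; obtain ⟨i, j⟩ := x
  fin_cases i <;> fin_cases j <;>
    simp [ψ₁, e, sc, Matrix.mulVec, dotProduct, Fintype.sum_prod_type, Fin.sum_univ_three,
      kroneckerMap_apply, Pi.single_apply, X2, Y2, Φf, Matrix.vecHead, Matrix.vecTail] <;>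
    ring

lemma mv42 : (Y2 ⊗ₖ X2) *ᵥ ψ₂ = (-(sc * (1/2))) • Φf := by
  funext x; obtain ⟨i, j⟩ := x
  fin_cases i <;> fin_cases j <;>
    simp [ψ₂, e, sc, Matrix.mulVec, dotProduct, Fintype.sum_prod_type, Fin.sum_univ_three,
      kroneckerMap_apply, Pi.single_apply, X2, Y2, Φf, Matrix.vecHead, Matrix.vecTail] <;>
    ring

lemma mvK1 : (K1 ⊗ₖ L1) *ᵥ ψ₁ = (0 : ℂ) • Φf := by
  funext x; obtain ⟨i, j⟩ := x
  fin_cases i <;> fin_cases j <;>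
    simp [ψ₁, e, Matrix.mulVec, dotProduct, Fintype.sum_prod_type, Fin.sum_univ_three,
      kroneckerMap_apply, Pi.single_apply, K1, L1, Φf, Matrix.vecHead, Matrix.vecTail]

lemma mvK1' : (K1 ⊗ₖ L1) *ᵥ ψ₂ = (0 : ℂ) • Φf := by
  funext x; obtain ⟨i, j⟩ := x
  fin_cases i <;> fin_cases j <;>
    simp [ψ₂, e, Matrix.mulVec, dotProduct, Fintype.sum_prod_type, Fin.sum_univ_three,
      kroneckerMap_apply, Pi.single_apply, K1, L1, Φf, Matrix.vecHead, Matrix.vecTail]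

lemma mvK2 : (K2 ⊗ₖ L2) *ᵥ ψ₁ = (0 : ℂ) • Φf := by
  funext x; obtain ⟨i, j⟩ := x
  fin_cases i <;> fin_cases j <;>
    simp [ψ₁, e, Matrix.mulVec, dotProduct, Fintype.sum_prod_type, Fin.sum_univ_three,
      kroneckerMap_apply, Pi.single_apply, K2, L2, Φf, Matrix.vecHead, Matrix.vecTail]

lemma mvK2' : (K2 ⊗ₖ L2) *ᵥ ψ₂ = (0 : ℂ) • Φf := by
  funext x; obtain ⟨i, j⟩ := x
  fin_cases i <;> fin_cases j <;>
    simp [ψ₂, e, Matrix.mulVec, dotProduct, Fintype.sum_prod_type, Fin.sum_univ_three,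
      kroneckerMap_apply, Pi.single_apply, K2, L2, Φf, Matrix.vecHead, Matrix.vecTail]

lemma mvP1 : (P1 ⊗ₖ Q0) *ᵥ ψ₁ = (0 : ℂ) • Φf := by
  funext x; obtain ⟨i, j⟩ := x
  fin_cases i <;> fin_cases j <;>
    simp [ψ₁, e, Matrix.mulVec, dotProduct, Fintype.sum_prod_type, Fin.sum_univ_three,
      kroneckerMap_apply, Pi.single_apply, P1, Q0, Φf, Matrix.vecHead, Matrix.vecTail]

lemma mvP1' : (P1 ⊗ₖ Q0) *ᵥ ψ₂ = (0 : ℂ) • Φf := by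
  funext x; obtain ⟨i, j⟩ := x
  fin_cases i <;> fin_cases j <;>
    simp [ψ₂, e, Matrix.mulVec, dotProduct, Fintype.sum_prod_type, Fin.sum_univ_three,
      kroneckerMap_apply, Pi.single_apply, P1, Q0, Φf, Matrix.vecHead, Matrix.vecTail]

lemma mvP2 : (P2 ⊗ₖ Q0) *ᵥ ψ₁ = (0 : ℂ) • Φf := by
  funext x; obtain ⟨i, j⟩ := x
  fin_cases i <;> fin_cases j <;>
    simp [ψ₁, e, Matrix.mulVec, dotProduct, Fintype.sum_prod_type, Fin.sum_univ_three,
      kroneckerMap_apply, Pi.single_apply, P2, Q0, Φf, Matrix.vecHead, Matrix.vecTail]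

lemma mvP2' : (P2 ⊗ₖ Q0) *ᵥ ψ₂ = (0 : ℂ) • Φf := by
  funext x; obtain ⟨i, j⟩ := x
  fin_cases i <;> fin_cases j <;>
    simp [ψ₂, e, Matrix.mulVec, dotProduct, Fintype.sum_prod_type, Fin.sum_univ_three,
      kroneckerMap_apply, Pi.single_apply, P2, Q0, Φf, Matrix.vecHead, Matrix.vecTail]

/- Gram identities -/

lemma gX1 : X1ᴴ * X1 = !![1225/1369, 0, 0; 0, 1/4, 1/4; 0, 1/4, 1/4] := by
  ext i j
  fin_cases i <;> fin_cases j <;>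
    simp [X1, Matrix.mul_apply, Fin.sum_univ_three, Matrix.conjTranspose_apply,
      Complex.star_def, map_div₀, map_ofNat, Complex.conj_ofNat, Matrix.vecHead, Matrix.vecTail] <;> norm_num

lemma gX2 : X2ᴴ * X2 = !![1225/1369, 0, 0; 0, 1/4, -(1/4); 0, -(1/4), 1/4] := by
  ext i j
  fin_cases i <;> fin_cases j <;>
    simp [X2, Matrix.mul_apply, Fin.sum_univ_three, Matrix.conjTranspose_apply,
      Complex.star_def, map_div₀, map_ofNat, Complex.conj_ofNat, Matrix.vecHead, Matrix.vecTail] <;> norm_num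

lemma gY1 : Y1ᴴ * Y1 = !![144/1369, 0, 0; 0, 1/4, 1/4; 0, 1/4, 1/4] := by
  ext i j
  fin_cases i <;> fin_cases j <;>
    simp [Y1, Matrix.mul_apply, Fin.sum_univ_three, Matrix.conjTranspose_apply,
      Complex.star_def, map_div₀, map_ofNat, Complex.conj_ofNat, Matrix.vecHead, Matrix.vecTail] <;> norm_num

lemma gY2 : Y2ᴴ * Y2 = !![144/1369, 0, 0; 0, 1/4, -(1/4); 0, -(1/4), 1/4] := by
  ext i j
  fin_cases i <;> fin_cases j <;>
    simp [Y2, Matrix.mul_apply, Fin.sum_univ_three, Matrix.conjTranspose_apply,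
      Complex.star_def, map_div₀, map_ofNat, Complex.conj_ofNat, Matrix.vecHead, Matrix.vecTail] <;> norm_num

lemma gK1 : K1ᴴ * K1 = !![0, 0, 0; 0, 1, 1; 0, 1, 1] := by
  ext i j
  fin_cases i <;> fin_cases j <;>
    simp [K1, Matrix.mul_apply, Fin.sum_univ_three, Matrix.conjTranspose_apply,
      Complex.star_def, map_div₀, map_ofNat, Complex.conj_ofNat, Matrix.vecHead, Matrix.vecTail] <;> norm_num

lemma gK2 : K2ᴴ * K2 = !![0, 0, 0; 0, 1, -1; 0, -1, 1] := by
  ext i j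
  fin_cases i <;> fin_cases j <;>
    simp [K2, Matrix.mul_apply, Fin.sum_univ_three, Matrix.conjTranspose_apply,
      Complex.star_def, map_div₀, map_ofNat, Complex.conj_ofNat, Matrix.vecHead, Matrix.vecTail] <;> norm_num

lemma gL1 : L1ᴴ * L1 = !![0, 0, 0; 0, 1/4, -(1/4); 0, -(1/4), 1/4] := by
  ext i j
  fin_cases i <;> fin_cases j <;>
    simp [L1, Matrix.mul_apply, Fin.sum_univ_three, Matrix.conjTranspose_apply,
      Complex.star_def, map_div₀, map_ofNat, Complex.conj_ofNat, Matrix.vecHead, Matrix.vecTail] <;> norm_num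

lemma gL2 : L2ᴴ * L2 = !![0, 0, 0; 0, 1/4, 1/4; 0, 1/4, 1/4] := by
  ext i j
  fin_cases i <;> fin_cases j <;>
    simp [L2, Matrix.mul_apply, Fin.sum_univ_three, Matrix.conjTranspose_apply,
      Complex.star_def, map_div₀, map_ofNat, Complex.conj_ofNat, Matrix.vecHead, Matrix.vecTail] <;> norm_num

lemma gP1 : P1ᴴ * P1 = !![20736/1874161, 0, 0; 0, 0, 0; 0, 0, 0] := by
  ext i j
  fin_cases i <;> fin_cases j <;>
    simp [P1, Matrix.mul_apply, Fin.sum_univ_three, Matrix.conjTranspose_apply,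
      Complex.star_def, map_div₀, map_ofNat, Complex.conj_ofNat, Matrix.vecHead, Matrix.vecTail] <;> norm_num

lemma gP2 : P2ᴴ * P2 = !![442225/1874161, 0, 0; 0, 0, 0; 0, 0, 0] := by
  ext i j
  fin_cases i <;> fin_cases j <;>
    simp [P2, Matrix.mul_apply, Fin.sum_univ_three, Matrix.conjTranspose_apply,
      Complex.star_def, map_div₀, map_ofNat, Complex.conj_ofNat, Matrix.vecHead, Matrix.vecTail] <;> norm_num

lemma gQ0 : Q0ᴴ * Q0 = !![1, 0, 0; 0, 0, 0; 0, 0, 0] := by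
  ext i j
  fin_cases i <;> fin_cases j <;>
    simp [Q0, Matrix.mul_apply, Fin.sum_univ_three, Matrix.conjTranspose_apply,
      Complex.star_def, map_div₀, map_ofNat, Complex.conj_ofNat, Matrix.vecHead, Matrix.vecTail] <;> norm_num

end SepDistAux

open SepDistAux in
set_option maxHeartbeats 2000000 in
theorem sep_distillation_three_three (p : ℝ) (hp0 : 0 < p) (hp1 : p < 1) :
    ∃ (φ : Fin 3 × Fin 3 → ℂ) (n : ℕ)
      (A : Fin n → Matrix (Fin 3) (Fin 3) ℂ) (B : Fin n → Matrix (Fin 3) (Fin 3) ℂ),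
      star φ ⬝ᵥ φ = 1 ∧ ¬ IsSimpleVec φ ∧
      (∑ k, (A k ⊗ₖ B k)ᴴ * (A k ⊗ₖ B k) = 1) ∧
      ∑ k, (A k ⊗ₖ B k) * ((p : ℂ) • proj ψ₁ + ((1 - p : ℝ) : ℂ) • proj ψ₂) * (A k ⊗ₖ B k)ᴴ
        = proj φ := by
  refine ⟨Φf, 12, AA, BB, ?_, ?_, ?_, ?_⟩
  · -- normalization
    simp [dotProduct, Fintype.sum_prod_type, Fin.sum_univ_three, Φf, Pi.star_apply,
      Complex.star_def, map_div₀, map_ofNat, Complex.conj_ofNat, Matrix.vecHead, Matrix.vecTail]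
    norm_num
  · -- entangled
    rintro ⟨x, y, h⟩
    have h00 := congrFun h (0, 0)
    have h11 := congrFun h (1, 1)
    have h01 := congrFun h (0, 1)
    have h10 := congrFun h (1, 0)
    simp [Φf, Matrix.vecHead, Matrix.vecTail] at h00 h11 h01 h10
    have key : (35/37 : ℂ) * (12/37) = 0 := by
      calc (35/37 : ℂ) * (12/37) = (x 0 * y 0) * (x 1 * y 1) := by rw [← h00, ← h11]
        _ = (x 0 * y 1) * (x 1 * y 0) := by ring
        _ = 0 := by rcases h01 with h | h <;> rw [h] <;> ring
    norm_num at key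
  · -- completeness
    have step : ∀ k : Fin 12, (AA k ⊗ₖ BB k)ᴴ * (AA k ⊗ₖ BB k)
        = ((AA k)ᴴ * AA k) ⊗ₖ ((BB k)ᴴ * BB k) := by
      intro k
      rw [kron_ct, ← Matrix.mul_kronecker_mul]
    rw [Finset.sum_congr rfl fun k _ => step k]
    simp only [Fin.sum_univ_succ, Finset.univ_unique, Fin.default_eq_zero, Finset.sum_singleton,
      Fin.sum_univ_zero, add_zero, AA, BB, Matrix.cons_val_zero, Matrix.cons_val_succ]
    rw [gX1, gX2, gY1, gY2, gK1, gK2, gL1, gL2, gP1, gP2, gQ0]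
    ext ⟨i, a⟩ ⟨j, b⟩
    fin_cases i <;> fin_cases a <;> fin_cases j <;> fin_cases b <;>
      simp [kroneckerMap_apply, Matrix.one_apply, Matrix.vecHead, Matrix.vecTail,
        Prod.ext_iff] <;>
      norm_num
  · -- output is the projection onto Φf
    have hσs : star sc = sc := star_sc
    have hss : sc * sc = 1/2 := sc_mul_sc
    have hstar12 : star ((1:ℂ)/2) = 1/2 := by
      simp [Complex.star_def, map_div₀, _root_.map_one, map_ofNat]
    have hcoef : (sc * (1/2)) * star (sc * (1/2)) = 1/8 := by
      rw [star_mul', hσs, hstar12]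
      linear_combination (1/4 : ℂ) * hss
    have hcoefn : (-(sc * (1/2))) * star (-(sc * (1/2))) = 1/8 := by
      rw [star_neg, neg_mul_neg, hcoef]
    set ρ : Matrix (Fin 3 × Fin 3) (Fin 3 × Fin 3) ℂ :=
      (p : ℂ) • proj ψ₁ + ((1 - p : ℝ) : ℂ) • proj ψ₂ with hρ
    set c8 : ℂ := (p : ℂ) * (1/8) + ((1 - p : ℝ) : ℂ) * (1/8) with hc8
    have expand : ∀ (M N : Matrix (Fin 3) (Fin 3) ℂ) (lv mv : ℂ),
        ((M ⊗ₖ N) *ᵥ ψ₁ = lv • Φf) → ((M ⊗ₖ N) *ᵥ ψ₂ = mv • Φf) →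
        (M ⊗ₖ N) * ρ * (M ⊗ₖ N)ᴴ
          = ((p : ℂ) * (lv * star lv) + ((1 - p : ℝ) : ℂ) * (mv * star mv)) • proj Φf := by
      intro M N lv mv h1 h2
      rw [hρ, mul_add, add_mul, mul_smul_comm, mul_smul_comm, smul_mul_assoc, smul_mul_assoc,
        proj_mul, proj_mul, h1, h2, proj_smul, proj_smul, smul_smul, smul_smul, ← add_smul]
    have t1 : (X1 ⊗ₖ Y1) * ρ * (X1 ⊗ₖ Y1)ᴴ = c8 • proj Φf := by
      rw [expand X1 Y1 _ _ mv11 mv12, hcoef]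
    have t2 : (X2 ⊗ₖ Y2) * ρ * (X2 ⊗ₖ Y2)ᴴ = c8 • proj Φf := by
      rw [expand X2 Y2 _ _ mv21 mv22, hcoef, hcoefn]
    have t3 : (Y1 ⊗ₖ X1) * ρ * (Y1 ⊗ₖ X1)ᴴ = c8 • proj Φf := by
      rw [expand Y1 X1 _ _ mv31 mv32, hcoef]
    have t4 : (Y2 ⊗ₖ X2) * ρ * (Y2 ⊗ₖ X2)ᴴ = c8 • proj Φf := by
      rw [expand Y2 X2 _ _ mv41 mv42, hcoef, hcoefn]
    have t5 : (K1 ⊗ₖ L1) * ρ * (K1 ⊗ₖ L1)ᴴ = (0:ℂ) • proj Φf := by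
      rw [expand K1 L1 _ _ mvK1 mvK1']; norm_num
    have t6 : (K2 ⊗ₖ L2) * ρ * (K2 ⊗ₖ L2)ᴴ = (0:ℂ) • proj Φf := by
      rw [expand K2 L2 _ _ mvK2 mvK2']; norm_num
    have t7 : (P1 ⊗ₖ Q0) * ρ * (P1 ⊗ₖ Q0)ᴴ = (0:ℂ) • proj Φf := by
      rw [expand P1 Q0 _ _ mvP1 mvP1']; norm_num
    have t8 : (P2 ⊗ₖ Q0) * ρ * (P2 ⊗ₖ Q0)ᴴ = (0:ℂ) • proj Φf := by
      rw [expand P2 Q0 _ _ mvP2 mvP2']; norm_num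
    simp only [Fin.sum_univ_succ, Fin.sum_univ_zero, add_zero, AA, BB,
      Matrix.cons_val_zero, Matrix.cons_val_succ]
    rw [t1, t2, t3, t4, t5, t6, t7, t8]
    simp only [zero_smul, add_zero, ← add_smul]
    have hone : c8 + (c8 + (c8 + (c8 + (c8 + (c8 + (c8 + c8)))))) = 1 := by
      rw [hc8]; push_cast; ring
    rw [hone, one_smul]
end
end

section
/- Every nonzero vector in the linear span of ψ₁ = (|0⟩⊗|1⟩ + |1⟩⊗|0⟩)/√2 and ψ₂ = (|0⟩⊗|2⟩ + |2⟩⊗|0⟩)/√2 in ℂ³ ⊗ ℂ³ is entangled; that is, no nonzero linear combination a·ψ₁ + b·ψ₂ can be written as x ⊗ y for vectors x, y ∈ ℂ³. -/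
open Kronecker Matrix

noncomputable section

theorem span_is_entangled (a b : ℂ) (h : a • ψ₁ + b • ψ₂ ≠ 0) :
    ¬ IsSimpleVec (a • ψ₁ + b • ψ₂) := by
  rintro ⟨x, y, hxy⟩
  set c : ℂ := ((Real.sqrt 2 : ℝ) : ℂ)⁻¹ with hc
  have hc0 : c ≠ 0 := by simp [hc]
  have h00 := congrFun hxy (0, 0)
  have h01 := congrFun hxy (0, 1)
  have h10 := congrFun hxy (1, 0)
  have h11 := congrFun hxy (1, 1)
  have h02 := congrFun hxy (0, 2)
  have h20 := congrFun hxy (2, 0)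
  have h22 := congrFun hxy (2, 2)
  simp only [ψ₁, ψ₂, e, Pi.add_apply, Pi.smul_apply, smul_eq_mul, ← hc] at h00 h01 h10 h11 h02 h20 h22
  simp [Pi.single_apply, Fin.ext_iff] at h00 h01 h10 h11 h02 h20 h22
  have ha : a = 0 := by
    have : (a * c) * (a * c) = 0 := by
      have e1 : x 0 * y 0 * (x 1 * y 1) = 0 := by rcases h00 with h' | h' <;> simp [h']
      linear_combination (x 1 * y 0) * h01 + (a * c) * h10 + e1
    simp [mul_eq_zero, hc0] at this
    tauto
  have hb : b = 0 := by
    have : (b * c) * (b * c) = 0 := by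
      have e1 : x 0 * y 0 * (x 2 * y 2) = 0 := by rcases h00 with h' | h' <;> simp [h']
      linear_combination (x 2 * y 0) * h02 + (b * c) * h20 + e1
    simp [mul_eq_zero, hc0] at this
    tauto
  exact h (by simp [ha, hb])
end
end

section
/- Let ψ₁, ψ₂ ∈ ℂ² ⊗ ℂ³ be linearly independent vectors such that no nonzero vector in their linear span is a product (simple) vector. Then there do not exist a 2×2 matrix A, a 3×3 matrix B, nonzero complex scalars c and d, and an entangled vector φ ∈ ℂ² ⊗ ℂ³ with (A ⊗ B)ψ₁ = c·φ and (A ⊗ B)ψ₂ = d·φ. -/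
open Kronecker Matrix

noncomputable section

lemma simple_smul {a b : ℕ} {v : Fin a × Fin b → ℂ} (c : ℂ) (h : IsSimpleVec v) :
    IsSimpleVec (c • v) := by
  obtain ⟨x, y, rfl⟩ := h
  exact ⟨c • x, y, by funext p; simp [mul_assoc]⟩

/-- If a matrix has range of dimension at most one, it is an outer product. -/
lemma outer_of_rank_le_one {m n : ℕ} (M : Matrix (Fin m) (Fin n) ℂ)
    (h : Module.finrank ℂ (LinearMap.range (Matrix.mulVecLin M)) ≤ 1) :
    ∃ (x : Fin m → ℂ) (g : Fin n → ℂ), ∀ i j, M i j = x i * g j := by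
  obtain ⟨v₀, hv₀⟩ := finrank_le_one_iff.mp h
  have hcol : ∀ j : Fin n, ∃ cj : ℂ, cj • (v₀ : Fin m → ℂ) = M.mulVec (Pi.single j 1) := by
    intro j
    have hmem : M.mulVec (Pi.single j 1) ∈ LinearMap.range (Matrix.mulVecLin M) :=
      ⟨Pi.single j 1, rfl⟩
    obtain ⟨cj, hcj⟩ := hv₀ ⟨_, hmem⟩
    exact ⟨cj, by simpa using congrArg (Subtype.val) hcj⟩
  choose g hg using hcol
  refine ⟨fun i => (v₀ : Fin m → ℂ) i, g, fun i j => ?_⟩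
  have := congrFun (hg j) i
  simp only [Matrix.mulVec_single, mul_one, MulOpposite.op_one, one_smul, Matrix.col_apply,
    Pi.smul_apply, smul_eq_mul] at this
  rw [← this]; simp [mul_comm]

lemma outer_A_simple {A : Matrix (Fin 2) (Fin 2) ℂ} {B : Matrix (Fin 3) (Fin 3) ℂ}
    {x f : Fin 2 → ℂ} (hA : ∀ i j, A i j = x i * f j) (ψ : Fin 2 × Fin 3 → ℂ) :
    IsSimpleVec ((A ⊗ₖ B).mulVec ψ) := by
  refine ⟨x, fun k => ∑ j, ∑ l, f j * B k l * ψ (j, l), ?_⟩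
  funext p
  simp only [Matrix.mulVec, dotProduct, Fintype.sum_prod_type,
    Matrix.kroneckerMap_apply, hA, Finset.mul_sum]
  refine Finset.sum_congr rfl fun j _ => Finset.sum_congr rfl fun l _ => by ring

lemma outer_B_simple {A : Matrix (Fin 2) (Fin 2) ℂ} {B : Matrix (Fin 3) (Fin 3) ℂ}
    {y g : Fin 3 → ℂ} (hB : ∀ k l, B k l = y k * g l) (ψ : Fin 2 × Fin 3 → ℂ) :
    IsSimpleVec ((A ⊗ₖ B).mulVec ψ) := by
  refine ⟨fun i => ∑ j, ∑ l, A i j * g l * ψ (j, l), y, ?_⟩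
  funext p
  simp only [Matrix.mulVec, dotProduct, Fintype.sum_prod_type,
    Matrix.kroneckerMap_apply, hB]
  rw [Finset.sum_mul]
  refine Finset.sum_congr rfl fun j _ => ?_
  rw [Finset.sum_mul]
  exact Finset.sum_congr rfl fun l _ => by ring

theorem no_single_kraus_maps_both {ψ₁ ψ₂ : Fin 2 × Fin 3 → ℂ}
    (hind : LinearIndependent ℂ ![ψ₁, ψ₂])
    (hspan : ∀ v ∈ Submodule.span ℂ {ψ₁, ψ₂}, v ≠ 0 → ¬ IsSimpleVec v) :
    ¬ ∃ (A : Matrix (Fin 2) (Fin 2) ℂ) (B : Matrix (Fin 3) (Fin 3) ℂ)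
        (c d : ℂ) (φ : Fin 2 × Fin 3 → ℂ),
        c ≠ 0 ∧ d ≠ 0 ∧ ¬ IsSimpleVec φ ∧
        (A ⊗ₖ B).mulVec ψ₁ = c • φ ∧ (A ⊗ₖ B).mulVec ψ₂ = d • φ := by
  rintro ⟨A, B, c, d, φ, hc, hd, hφ, h1, h2⟩
  have hφ' : φ = c⁻¹ • ((A ⊗ₖ B).mulVec ψ₁) := by
    rw [h1, smul_smul, inv_mul_cancel₀ hc, one_smul]
  set w : Fin 2 × Fin 3 → ℂ := d • ψ₁ - c • ψ₂ with hw
  have hwmem : w ∈ Submodule.span ℂ {ψ₁, ψ₂} :=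
    Submodule.sub_mem _
      (Submodule.smul_mem _ _ (Submodule.subset_span (by simp)))
      (Submodule.smul_mem _ _ (Submodule.subset_span (by simp)))
  have hwne : w ≠ 0 := by
    intro h0
    have hsum : ∑ i, ![d, -c] i • ![ψ₁, ψ₂] i = 0 := by
      simp only [Fin.sum_univ_two, Matrix.cons_val_zero, Matrix.cons_val_one, Matrix.head_cons,
        neg_smul, ← sub_eq_add_neg]
      exact h0
    have := Fintype.linearIndependent_iff.mp hind ![d, -c] hsum 0
    simp only [Matrix.cons_val_zero] at this
    exact hd this
  have hker : (A ⊗ₖ B).mulVec w = 0 := by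
    have : (A ⊗ₖ B).mulVecLin w = d • ((A ⊗ₖ B).mulVecLin ψ₁) - c • ((A ⊗ₖ B).mulVecLin ψ₂) := by
      rw [hw, map_sub, LinearMap.map_smul, LinearMap.map_smul]
    simp only [Matrix.mulVecLin_apply] at this
    rw [this, h1, h2, smul_smul, smul_smul, mul_comm, sub_self]
  by_cases hAdet : A.det = 0
  · -- A is singular, hence rank ≤ 1, hence outer product, hence φ is simple
    obtain ⟨v, hv, hvA⟩ := (Matrix.exists_mulVec_eq_zero_iff).mpr hAdet
    have hker1 : Submodule.span ℂ {v} ≤ LinearMap.ker (Matrix.mulVecLin A) := by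
      rw [Submodule.span_le]; intro z hz; rcases hz with rfl; exact hvA
    have h1le : 1 ≤ Module.finrank ℂ (LinearMap.ker (Matrix.mulVecLin A)) := by
      have := Submodule.finrank_mono hker1
      rwa [finrank_span_singleton hv] at this
    have hrn := LinearMap.finrank_range_add_finrank_ker (Matrix.mulVecLin A)
    have hdim : Module.finrank ℂ (Fin 2 → ℂ) = 2 := by simp
    have hr : Module.finrank ℂ (LinearMap.range (Matrix.mulVecLin A)) ≤ 1 := by omega
    obtain ⟨x, f, hxf⟩ := outer_of_rank_le_one A hr
    exact hφ (hφ' ▸ simple_smul _ (outer_A_simple hxf ψ₁))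
  · -- A is invertible; the two rows of w lie in the kernel of B
    have hAinj : ∀ t : Fin 2 → ℂ, A.mulVec t = 0 → t = 0 := by
      intro t ht
      by_contra htne
      exact hAdet (Matrix.exists_mulVec_eq_zero_iff.mp ⟨t, htne, ht⟩)
    have hB : ∀ j : Fin 2, B.mulVec (fun l => w (j, l)) = 0 := by
      intro j
      funext k
      have key : A.mulVec (fun j' => ∑ l, B k l * w (j', l)) = 0 := by
        funext i
        have := congrFun hker (i, k)
        simp only [Matrix.mulVec, dotProduct, Fintype.sum_prod_type,
          Matrix.kroneckerMap_apply, Pi.zero_apply] at this ⊢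
        rw [← this]
        refine Finset.sum_congr rfl fun j' _ => ?_
        rw [Finset.mul_sum]
        exact Finset.sum_congr rfl fun l _ => by ring
      have := congrFun (hAinj _ key) j
      simpa [Matrix.mulVec, dotProduct] using this
    set u : Fin 3 → ℂ := fun l => w (0, l) with hu
    set v : Fin 3 → ℂ := fun l => w (1, l) with hv
    by_cases hv0 : v = 0
    · -- w = e₀ ⊗ u : simple
      refine hspan w hwmem hwne ⟨![1, 0], u, ?_⟩
      funext p
      obtain ⟨j, l⟩ := p
      fin_cases j
      · simp [hu]
      · simpa [hv] using congrFun hv0 l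
    · by_cases hprop : ∃ a : ℂ, a • v = u
      · obtain ⟨a, ha⟩ := hprop
        refine hspan w hwmem hwne ⟨![a, 1], v, ?_⟩
        funext p
        obtain ⟨j, l⟩ := p
        fin_cases j
        · simpa [hu] using (congrFun ha l).symm
        · simp [hv]
      · -- u, v linearly independent ⇒ rank B ≤ 1 ⇒ φ simple
        have hli : LinearIndependent ℂ ![u, v] := by
          rw [linearIndependent_fin2]
          exact ⟨by simpa using hv0, fun a hav => hprop ⟨a, by simpa using hav⟩⟩
        have hspanuv : Submodule.span ℂ (Set.range ![u, v]) ≤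
            LinearMap.ker (Matrix.mulVecLin B) := by
          rw [Submodule.span_le]
          rintro z ⟨i, rfl⟩
          fin_cases i
          · exact hB 0
          · exact hB 1
        have h2le : 2 ≤ Module.finrank ℂ (LinearMap.ker (Matrix.mulVecLin B)) := by
          have := Submodule.finrank_mono hspanuv
          rwa [finrank_span_eq_card hli, Fintype.card_fin] at this
        have hrn := LinearMap.finrank_range_add_finrank_ker (Matrix.mulVecLin B)
        have hdim : Module.finrank ℂ (Fin 3 → ℂ) = 3 := by simp
        have hr : Module.finrank ℂ (LinearMap.range (Matrix.mulVecLin B)) ≤ 1 := by omega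
        obtain ⟨y, g, hyg⟩ := outer_of_rank_le_one B hr
        exact hφ (hφ' ▸ simple_smul _ (outer_B_simple hyg ψ₁))
end
end
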